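/- Let G and H be graphs and let v ∈ V(H) be a strong support vertex of H, that is, v is adjacent to at least two leaves of H. Then γ_I(G∘_v H) = n(G)·γ_I(H). Furthermore, if G is a graph of maximum degree at least 2, H is a graph, and v ∈ V(H) is such that every γ_I(H)-function g satisfies g(v) ≠ 1, then also γ_I(G∘_v H) = n(G)·γ_I(H). -/

import Mathlib

open Finset

open scoped Classical

/-- An Italian dominating function on a finite simple graph: values in {0,1,2} and
every vertex with value 0 has neighbour values summing to at least 2. -/
noncomputable def IsIDF {α : Type*} [Fintype α] (G : SimpleGraph α) (f : α → ℕ) : Prop :=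
  (∀ u, f u ≤ 2) ∧
    ∀ u, f u = 0 → 2 ≤ ∑ w ∈ Finset.univ.filter (fun w => G.Adj u w), f w

/-- The Italian domination number γ_I(G). -/
noncomputable def italianNumber {α : Type*} [Fintype α] (G : SimpleGraph α) : ℕ :=
  sInf {n | ∃ f : α → ℕ, IsIDF G f ∧ ∑ u, f u = n}

/-- A γ_I(G)-function: an IDF on G of minimum weight. -/
noncomputable def IsMinIDF {α : Type*} [Fintype α] (G : SimpleGraph α) (f : α → ℕ) : Prop :=
  IsIDF G f ∧ ∑ u, f u = italianNumber G

/-- D is a dominating set of G. -/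
def IsDomSet {α : Type*} (G : SimpleGraph α) (D : Set α) : Prop :=
  ∀ u ∉ D, ∃ w ∈ D, G.Adj u w

/-- The domination number γ(G). -/
noncomputable def dominationNumber {α : Type*} [Fintype α] (G : SimpleGraph α) : ℕ :=
  sInf {n | ∃ D : Finset α, IsDomSet G ↑D ∧ D.card = n}

/-- The degree of a vertex. -/
noncomputable def deg {α : Type*} [Fintype α] (G : SimpleGraph α) (u : α) : ℕ :=
  (Finset.univ.filter (fun w => G.Adj u w)).card

/-- The rooted product G∘_v H: one copy of H for each vertex of G, the root v of the
x-th copy being identified with the vertex x of G. The pair (x, y) is the vertex y of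
the x-th copy of H; in particular (x, v) is the vertex x of G. -/
def rootedProd {α β : Type*} (G : SimpleGraph α) (H : SimpleGraph β) (v : β) :
    SimpleGraph (α × β) where
  Adj p q := (p.1 = q.1 ∧ H.Adj p.2 q.2) ∨ (p.2 = v ∧ q.2 = v ∧ G.Adj p.1 q.1)
  symm := by
    constructor
    rintro ⟨x, y⟩ ⟨x', y'⟩ (⟨h1, h2⟩ | ⟨h1, h2, h3⟩)
    · exact Or.inl ⟨h1.symm, h2.symm⟩
    · exact Or.inr ⟨h2, h1, h3.symm⟩
  loopless := by
    constructor
    rintro ⟨x, y⟩ (⟨_, h⟩ | ⟨_, _, h⟩)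
    · exact H.loopless.irrefl _ h
    · exact G.loopless.irrefl _ h

/-- The weight ω(f_x) of the restriction of f to the copy H_x. -/
def copyWeight {α β : Type*} [Fintype β] (f : α × β → ℕ) (x : α) : ℕ :=
  ∑ y, f (x, y)

/-- The graph H − {v} obtained from H by deleting the vertex v. -/
def deleteVertex {β : Type*} (H : SimpleGraph β) (v : β) : SimpleGraph {w : β // w ≠ v} :=
  SimpleGraph.induce {w : β | w ≠ v} H


section Aux

variable {α β : Type*} [Fintype α] [Fintype β]

lemma idf_set_nonempty (G : SimpleGraph α) :
    {n | ∃ f : α → ℕ, IsIDF G f ∧ ∑ u, f u = n}.Nonempty :=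
  ⟨∑ _u : α, 2, fun _ => 2, ⟨fun _ => le_refl 2, fun _ h => by simp at h⟩, rfl⟩

lemma exists_minIDF (G : SimpleGraph α) : ∃ f : α → ℕ, IsMinIDF G f := by
  obtain ⟨f, hf, hw⟩ := Nat.sInf_mem (idf_set_nonempty G)
  exact ⟨f, hf, hw⟩

lemma italian_le (G : SimpleGraph α) {f : α → ℕ} (hf : IsIDF G f) :
    italianNumber G ≤ ∑ u, f u :=
  Nat.sInf_le ⟨f, hf, rfl⟩

omit [Fintype α] [Fintype β] in
lemma rootedProd_adj (G : SimpleGraph α) (H : SimpleGraph β) (v : β) (p q : α × β) :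
    (rootedProd G H v).Adj p q ↔
      ((p.1 = q.1 ∧ H.Adj p.2 q.2) ∨ (p.2 = v ∧ q.2 = v ∧ G.Adj p.1 q.1)) := Iff.rfl

lemma filter_adj_eq (G : SimpleGraph α) (H : SimpleGraph β) (v : β) (x : α) {y : β}
    (hy : y ≠ v) :
    univ.filter (fun p => (rootedProd G H v).Adj (x, y) p)
      = (univ.filter (fun w => H.Adj y w)).image (fun w => (x, w)) := by
  ext ⟨x', w⟩
  simp only [mem_filter, mem_univ, true_and, mem_image, rootedProd_adj]
  constructor
  · rintro (⟨h1, h2⟩ | ⟨h, _, _⟩)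
    · exact ⟨w, h2, by simp [h1.symm]⟩
    · exact absurd h hy
  · rintro ⟨w', h, he⟩
    obtain ⟨rfl, rfl⟩ : x = x' ∧ w' = w := by
      constructor
      · exact congrArg Prod.fst he
      · exact congrArg Prod.snd he
    exact Or.inl ⟨rfl, h⟩

lemma rooted_sum_eq (G : SimpleGraph α) (H : SimpleGraph β) (v : β) (f : α × β → ℕ)
    (x : α) {y : β} (hy : y ≠ v) :
    ∑ p ∈ univ.filter (fun p => (rootedProd G H v).Adj (x, y) p), f p
      = ∑ w ∈ univ.filter (fun w => H.Adj y w), f (x, w) := by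
  rw [filter_adj_eq G H v x hy, Finset.sum_image]
  intro a _ b _ h
  simpa using congrArg Prod.snd h

lemma incopy_sum_le (G : SimpleGraph α) (H : SimpleGraph β) (v : β) (f : α × β → ℕ)
    (x : α) (y : β) :
    ∑ w ∈ univ.filter (fun w => H.Adj y w), f (x, w)
      ≤ ∑ p ∈ univ.filter (fun p => (rootedProd G H v).Adj (x, y) p), f p := by
  have hinj : ∀ a ∈ univ.filter (fun w => H.Adj y w), ∀ b ∈ univ.filter (fun w => H.Adj y w),
      (fun w => ((x, w) : α × β)) a = (fun w => (x, w)) b → a = b := by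
    intro a _ b _ h
    simpa using congrArg Prod.snd h
  rw [← Finset.sum_image (f := f) (g := fun w => ((x, w) : α × β)) hinj]
  apply Finset.sum_le_sum_of_subset
  intro p hp
  simp only [mem_image, mem_filter, mem_univ, true_and] at hp ⊢
  obtain ⟨w, hw, rfl⟩ := hp
  exact Or.inl ⟨rfl, hw⟩

end Aux

/-- Theorems: if v is a strong support vertex of H (adjacent to at
least two leaves of H), then γ_I(G∘_v H) = n(G)γ_I(H); furthermore, if G has maximum
degree at least 2 and every γ_I(H)-function g satisfies g(v) ≠ 1, then also
γ_I(G∘_v H) = n(G)γ_I(H). -/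
theorem stmt19 {α β : Type*} [Fintype α] [Nonempty α] [Fintype β]
    (G : SimpleGraph α) (H : SimpleGraph β) (v : β) :
    ((∃ l₁ l₂ : β, l₁ ≠ l₂ ∧ H.Adj v l₁ ∧ H.Adj v l₂ ∧ deg H l₁ = 1 ∧ deg H l₂ = 1) →
      italianNumber (rootedProd G H v) = Fintype.card α * italianNumber H) ∧
    ((∃ u : α, 2 ≤ deg G u) → (∀ g : β → ℕ, IsMinIDF H g → g v ≠ 1) →
      italianNumber (rootedProd G H v) = Fintype.card α * italianNumber H) := by
  -- upper bound, common to both parts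
  have upper : italianNumber (rootedProd G H v) ≤ Fintype.card α * italianNumber H := by
    obtain ⟨g, hg, hgw⟩ := exists_minIDF H
    have hidf : IsIDF (rootedProd G H v) (fun p => g p.2) := by
      refine ⟨fun p => hg.1 p.2, ?_⟩
      rintro ⟨x, y⟩ h0
      calc 2 ≤ ∑ w ∈ univ.filter (fun w => H.Adj y w), g w := hg.2 y h0
        _ = ∑ w ∈ univ.filter (fun w => H.Adj y w), (fun p : α × β => g p.2) (x, w) := rfl
        _ ≤ _ := incopy_sum_le G H v (fun p => g p.2) x y
    have hw : ∑ p : α × β, (fun p : α × β => g p.2) p = Fintype.card α * italianNumber H := by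
      rw [Fintype.sum_prod_type]
      simp only
      rw [Finset.sum_const, ← hgw]
      simp [mul_comm]
    calc italianNumber (rootedProd G H v) ≤ ∑ p : α × β, (fun p : α × β => g p.2) p :=
          italian_le _ hidf
      _ = Fintype.card α * italianNumber H := hw
  -- lower bound skeleton: if every copy has weight at least γ_I(H), we are done
  have lower : ∀ f : α × β → ℕ, IsMinIDF (rootedProd G H v) f →
      (∀ x : α, italianNumber H ≤ copyWeight f x) →
      Fintype.card α * italianNumber H ≤ italianNumber (rootedProd G H v) := by
    intro f hf key
    calc Fintype.card α * italianNumber H = ∑ _x : α, italianNumber H := by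
          rw [Finset.sum_const]; simp [mul_comm]
      _ ≤ ∑ x : α, copyWeight f x := Finset.sum_le_sum (fun x _ => key x)
      _ = ∑ p : α × β, f p := by rw [Fintype.sum_prod_type]; rfl
      _ = italianNumber (rootedProd G H v) := hf.2
  obtain ⟨f, hf⟩ := exists_minIDF (rootedProd G H v)
  constructor
  · rintro ⟨l₁, l₂, hne, hl1, hl2, hd1, hd2⟩
    refine le_antisymm upper (lower f hf ?_)
    intro x
    have hleaf : ∀ l, H.Adj v l → deg H l = 1 → f (x, v) = 0 → 1 ≤ f (x, l) := by
      intro l hvl hdeg h0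
      by_contra hcon
      have hl0 : f (x, l) = 0 := by omega
      have h2 := hf.1.2 (x, l) hl0
      have hlv : l ≠ v := fun he => H.loopless.irrefl v (he ▸ hvl)
      rw [rooted_sum_eq G H v f x hlv] at h2
      have hfil : univ.filter (fun w => H.Adj l w) = {v} := by
        have hv : v ∈ univ.filter (fun w => H.Adj l w) := by
          simp [hvl.symm]
        have hc : (univ.filter (fun w => H.Adj l w)).card = 1 := hdeg
        rw [Finset.card_eq_one] at hc
        obtain ⟨a, ha⟩ := hc
        rw [ha] at hv ⊢
        simp only [mem_singleton] at hv
        rw [hv]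
      rw [hfil] at h2
      simp [h0] at h2
    have hidf : IsIDF H (fun y => f (x, y)) := by
      refine ⟨fun y => hf.1.1 (x, y), fun y h0 => ?_⟩
      show 2 ≤ ∑ w ∈ univ.filter (fun w => H.Adj y w), f (x, w)
      have h0' : f (x, y) = 0 := h0
      by_cases hyv : y = v
      · rw [hyv] at h0' ⊢
        have h1 := hleaf l₁ hl1 hd1 h0'
        have h2 := hleaf l₂ hl2 hd2 h0'
        have hsub : ({l₁, l₂} : Finset β) ⊆ univ.filter (fun w => H.Adj v w) := by
          intro w hw
          simp only [mem_insert, mem_singleton] at hw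
          rcases hw with rfl | rfl <;> simp [hl1, hl2]
        calc 2 ≤ f (x, l₁) + f (x, l₂) := by omega
          _ = ∑ w ∈ ({l₁, l₂} : Finset β), f (x, w) :=
              (Finset.sum_pair (f := fun w => f (x, w)) hne).symm
          _ ≤ _ := Finset.sum_le_sum_of_subset hsub
      · have h2 := hf.1.2 (x, y) h0
        rw [rooted_sum_eq G H v f x hyv] at h2
        exact h2
    exact italian_le H hidf
  · rintro - hmin
    refine le_antisymm upper (lower f hf ?_)
    intro x
    set h : β → ℕ := fun y => if y = v then max (f (x, v)) 1 else f (x, y) with hh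
    have hhf : ∀ y, f (x, y) ≤ h y := by
      intro y
      by_cases hy : y = v
      · rw [hy]; simp [h]
      · simp [h, hy]
    have hidf : IsIDF H h := by
      constructor
      · intro y
        by_cases hy : y = v
        · have := hf.1.1 (x, v)
          simp only [h, hy, if_pos rfl]
          omega
        · simpa [h, hy] using hf.1.1 (x, y)
      · intro y h0
        have hyv : y ≠ v := by
          intro he
          rw [he] at h0
          simp only [h, if_pos rfl] at h0
          omega
        have hy' : f (x, y) = 0 := by simpa [h, hyv] using h0
        have h2 := hf.1.2 (x, y) hy'
        rw [rooted_sum_eq G H v f x hyv] at h2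
        calc 2 ≤ ∑ w ∈ univ.filter (fun w => H.Adj y w), f (x, w) := h2
          _ ≤ ∑ w ∈ univ.filter (fun w => H.Adj y w), h w :=
              Finset.sum_le_sum (fun w _ => hhf w)
    have hle : italianNumber H ≤ ∑ y, h y := italian_le H hidf
    by_cases hv0 : f (x, v) = 0
    · have hwsum : ∑ y, h y = copyWeight f x + 1 := by
        have e1 : ∑ y, h y = ∑ y ∈ univ \ {v}, h y + h v :=
          Finset.sum_eq_sum_sdiff_singleton_add (mem_univ v) h
        have e2 : copyWeight f x = ∑ y ∈ univ \ {v}, f (x, y) + f (x, v) :=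
          Finset.sum_eq_sum_sdiff_singleton_add (mem_univ v) _
        have e3 : ∑ y ∈ univ \ {v}, h y = ∑ y ∈ univ \ {v}, f (x, y) := by
          refine Finset.sum_congr rfl fun y hy => ?_
          simp only [mem_sdiff, mem_singleton] at hy
          simp [h, hy.2]
        have e4 : h v = 1 := by simp [h, hv0]
        rw [e1, e3, e4, e2, hv0]
      by_contra hlt
      push_neg at hlt
      have heq : italianNumber H = ∑ y, h y := le_antisymm hle (by omega)
      have hm : IsMinIDF H h := ⟨hidf, heq.symm⟩
      exact hmin h hm (by simp [h, hv0])
    · have hwsum : ∑ y, h y = copyWeight f x := by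
        refine Finset.sum_congr rfl fun y _ => ?_
        by_cases hy : y = v
        · rw [hy]
          simp only [h, if_pos rfl]
          omega
        · simp [h, hy]
      omega
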